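/- Let n ≥ 2, c = (c_1,…,c_n) ∈ ℂ^n, and k ∈ {1,…,n−1}. Let c^{(s_k)} denote the tuple obtained from c by exchanging c_k and c_{k+1}. Then on V^{⊗n}: P_{k,k+1} R_{k+1,k}(c_{k+1}−c_k) · F(c) = F(c^{(s_k)}) · P_{k,k+1} R_{k,k+1}(c_k−c_{k+1}), where R_{k+1,k}(u) := P R(u) P acting on the factors k, k+1. -/

import Mathlib

/-!
We model the finite-dimensional complex vector space `V` as `ℂ^N` (i.e. `Fin N → ℂ`),
so that `V^{⊗ n}` is `(Fin n → Fin N) → ℂ` and endomorphisms of `V^{⊗ n}` are matrices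
indexed by multi-indices `Fin n → Fin N`.
-/

open scoped BigOperators

noncomputable section

/-- Endomorphisms of `V ⊗ V` for `V = ℂ^N`. -/
abbrev End2 (N : ℕ) := Matrix (Fin N × Fin N) (Fin N × Fin N) ℂ

/-- Endomorphisms of `V^{⊗ n}` for `V = ℂ^N`. -/
abbrev EndT (N n : ℕ) := Matrix (Fin n → Fin N) (Fin n → Fin N) ℂ

/-- `X_{a,b}` : the endomorphism `X` of `V ⊗ V` applied to the tensor factors `a` and `b`
(in that order) of `V^{⊗ n}`, and the identity on all other factors. -/
def op2 (N n : ℕ) (X : End2 N) (a b : Fin n) : EndT N n :=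
  fun f g => X (f a, f b) (g a, g b) *
    ∏ i : Fin n, if i ≠ a ∧ i ≠ b then (if f i = g i then (1 : ℂ) else 0) else 1

/-- The flip (permutation) operator `P : x ⊗ y ↦ y ⊗ x` on `V ⊗ V`. -/
def flipMat (N : ℕ) : End2 N := fun p q => if p.1 = q.2 ∧ p.2 = q.1 then 1 else 0

/-- `R` is a solution of the Yang--Baxter equation (with additive spectral parameters)
on `V ⊗ V ⊗ V`:  `R₁₂(u) R₁₃(u+v) R₂₃(v) = R₂₃(v) R₁₃(u+v) R₁₂(u)`. -/
def YangBaxter (N : ℕ) (R : ℂ → End2 N) : Prop :=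
  ∀ u v : ℂ,
    op2 N 3 (R u) 0 1 * op2 N 3 (R (u + v)) 0 2 * op2 N 3 (R v) 1 2 =
    op2 N 3 (R v) 1 2 * op2 N 3 (R (u + v)) 0 2 * op2 N 3 (R u) 0 1

/-- The fused operator `R_{c,c'}(u)`, acting on `V^{⊗ m}`, where the `n` factors of the first
block are embedded via `a` and the `n'` factors of the second block via `b`:
`R_{c,c'}(u) = ∏→_{i=1..n'} [ R_{n,i'}(u+c_n−c'_i) ⋯ R_{2,i'}(u+c_2−c'_i) R_{1,i'}(u+c_1−c'_i) ]`. -/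
def fusedOp (N : ℕ) (R : ℂ → End2 N) {m n n' : ℕ} (a : Fin n → Fin m) (b : Fin n' → Fin m)
    (c : Fin n → ℂ) (c' : Fin n' → ℂ) (u : ℂ) : EndT N m :=
  ((List.finRange n').map fun i =>
    (((List.finRange n).reverse).map fun k =>
      op2 N m (R (u + c k - c' i)) (a k) (b i)).prod).prod

/-- The list of pairs `(i,j)` with `i < j`, in lexicographic order. -/
def lexPairs (n : ℕ) : List (Fin n × Fin n) :=
  (List.finRange n).flatMap fun i =>
    ((List.finRange n).filter fun j => decide (i < j)).map fun j => (i, j)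

/-- The operator `F(c) = ∏→_{1 ≤ i < j ≤ n} R_{i,j}(c_i − c_j)` on `V^{⊗ n}`
(product over the pairs `i < j` in lexicographic order). -/
def Fop (N : ℕ) (R : ℂ → End2 N) {n : ℕ} (c : Fin n → ℂ) : EndT N n :=
  ((lexPairs n).map fun p => op2 N n (R (c p.1 - c p.2)) p.1 p.2).prod

/-- The endomorphism of `V^{⊗ n}` embedded into `V^{⊗ m}`, acting on the factors listed
by `e` and identically on all other factors. -/
def opBlock (N : ℕ) {m n : ℕ} (e : Fin n → Fin m) (X : EndT N n) : EndT N m :=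
  fun f g => X (f ∘ e) (g ∘ e) *
    ∏ i : Fin m, if ∀ k, e k ≠ i then (if f i = g i then (1 : ℂ) else 0) else 1

/-- The operator `P_π` on `V^{⊗ n}` permuting the tensor factors:
`P_π (x_1 ⊗ ⋯ ⊗ x_n) = x_{π(1)} ⊗ ⋯ ⊗ x_{π(n)}`. -/
def permMat (N n : ℕ) (π : Equiv.Perm (Fin n)) : EndT N n :=
  fun f g => if f = g ∘ π then 1 else 0

/-- The tensor product of a vector of `V^{⊗ n}` and a vector of `V^{⊗ n'}`,
as a vector of `V^{⊗ (n+n')}`. -/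
def tensVec (N : ℕ) {n n' : ℕ} (x : (Fin n → Fin N) → ℂ) (y : (Fin n' → Fin N) → ℂ) :
    (Fin (n + n') → Fin N) → ℂ :=
  fun f => x (fun i => f (Fin.castAdd n' i)) * y (fun j => f (Fin.natAdd n j))

end

noncomputable section
open scoped BigOperators
variable {N m n : ℕ}

/-- indicator of a decidable proposition -/
private lemma prod_ind {ι : Type*} [Fintype ι] (P : ι → Prop) [DecidablePred P]
    (f g : ι → Fin N) :
    (∏ i : ι, if P i then (if f i = g i then (1 : ℂ) else 0) else 1) =
      if (∀ i, P i → f i = g i) then 1 else 0 := by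
  classical
  by_cases h : ∀ i, P i → f i = g i
  · rw [if_pos h]
    apply Finset.prod_eq_one
    intro i _
    by_cases hP : P i
    · rw [if_pos hP, if_pos (h i hP)]
    · rw [if_neg hP]
  · rw [if_neg h]
    push_neg at h
    obtain ⟨i, hP, hfg⟩ := h
    apply Finset.prod_eq_zero (Finset.mem_univ i)
    rw [if_pos hP, if_neg hfg]

lemma op2_apply (X : End2 N) (a b : Fin n) (f g : Fin n → Fin N) :
    op2 N n X a b f g = X (f a, f b) (g a, g b) *
      if (∀ i, (i ≠ a ∧ i ≠ b) → f i = g i) then 1 else 0 := by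
  classical
  rw [op2, prod_ind]
  congr

lemma opBlock_apply (e : Fin n → Fin m) (X : EndT N n) (f g : Fin m → Fin N) :
    opBlock N e X f g = X (f ∘ e) (g ∘ e) *
      if (∀ i, (∀ k, e k ≠ i) → f i = g i) then 1 else 0 := by
  classical
  rw [opBlock, prod_ind]
  congr

lemma opBlock_mul (e : Fin n → Fin m) (he : Function.Injective e) (X Y : EndT N n) :
    opBlock N e (X * Y) = opBlock N e X * opBlock N e Y := by
  classical
  ext f h
  rw [Matrix.mul_apply]
  have key : ∀ g : Fin m → Fin N,
      opBlock N e X f g * opBlock N e Y g h =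
      ∑ q : Fin n → Fin N, if q = g ∘ e then opBlock N e X f g * opBlock N e Y g h else 0 := by
    intro g
    rw [Finset.sum_ite_eq' Finset.univ (g ∘ e) (fun _ => _)]
    simp
  calc opBlock N e (X * Y) f h
      = ∑ q : Fin n → Fin N, X (f ∘ e) q * Y q (h ∘ e) *
          (if (∀ i, (∀ k, e k ≠ i) → f i = h i) then 1 else 0) := by
        rw [opBlock_apply, Matrix.mul_apply, Finset.sum_mul]
    _ = ∑ q : Fin n → Fin N, ∑ g : Fin m → Fin N,
          (if q = g ∘ e then opBlock N e X f g * opBlock N e Y g h else 0) := by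
        refine Finset.sum_congr rfl fun q _ => ?_
        -- inner sum collapses to the single g₀
        set g₀ : Fin m → Fin N := fun i => if hi : ∃ k, e k = i then q hi.choose else f i with hg₀
        have hg₀e : g₀ ∘ e = q := by
          funext k
          have hex : ∃ k', e k' = e k := ⟨k, rfl⟩
          have : hex.choose = k := he hex.choose_spec
          simp only [Function.comp, hg₀, dif_pos hex, this]
        have hg₀out : ∀ i, (∀ k, e k ≠ i) → g₀ i = f i := by
          intro i hi
          have : ¬ ∃ k, e k = i := by push_neg; exact hi
          simp only [hg₀, dif_neg this]
        rw [Finset.sum_eq_single g₀]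
        · rw [if_pos hg₀e.symm, opBlock_apply, opBlock_apply, hg₀e]
          have h1 : (∀ i, (∀ k, e k ≠ i) → f i = g₀ i) := fun i hi => (hg₀out i hi).symm
          rw [if_pos h1]
          have h2 : (∀ i, (∀ k, e k ≠ i) → g₀ i = h i) ↔ (∀ i, (∀ k, e k ≠ i) → f i = h i) := by
            constructor
            · intro hyp i hi; rw [← hg₀out i hi]; exact hyp i hi
            · intro hyp i hi; rw [hg₀out i hi]; exact hyp i hi
          rw [if_congr h2 rfl rfl]
          ring
        · intro g _ hgne
          by_cases hq : q = g ∘ e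
          · rw [if_pos hq]
            -- g differs from g₀ somewhere outside range e
            have : ∃ i, (∀ k, e k ≠ i) ∧ f i ≠ g i := by
              by_contra hcon
              push_neg at hcon
              apply hgne
              funext i
              by_cases hi : ∃ k, e k = i
              · obtain ⟨k, rfl⟩ := hi
                have : g₀ (e k) = q k := congrFun hg₀e k
                rw [this, hq]; rfl
              · push_neg at hi
                rw [hg₀out i hi]
                exact (hcon i hi).symm
            obtain ⟨i, hi, hfi⟩ := this
            rw [opBlock_apply]
            have : ¬ (∀ i, (∀ k, e k ≠ i) → f i = g i) := fun hyp => hfi (hyp i hi)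
            rw [if_neg this]
            ring
          · rw [if_neg hq]
        · intro habs
          exact absurd (Finset.mem_univ g₀) habs
    _ = ∑ g : Fin m → Fin N, ∑ q : Fin n → Fin N,
          (if q = g ∘ e then opBlock N e X f g * opBlock N e Y g h else 0) := Finset.sum_comm
    _ = ∑ g : Fin m → Fin N, opBlock N e X f g * opBlock N e Y g h := by
        refine Finset.sum_congr rfl fun g _ => ?_
        rw [Finset.sum_ite_eq' Finset.univ (g ∘ e) (fun _ => _)]
        simp

end
noncomputable section
open scoped BigOperators
variable {N m n : ℕ}

private lemma ind_mul_ind (p q : Prop) [Decidable p] [Decidable q] :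
    (if p then (1:ℂ) else 0) * (if q then 1 else 0) = if p ∧ q then 1 else 0 := by
  by_cases hp : p <;> by_cases hq : q <;> simp [hp, hq]

lemma opBlock_one (e : Fin n → Fin m) (he : Function.Injective e) :
    opBlock N e (1 : EndT N n) = 1 := by
  classical
  ext f g
  rw [opBlock_apply, Matrix.one_apply, Matrix.one_apply, ind_mul_ind]
  refine if_congr ?_ rfl rfl
  constructor
  · rintro ⟨h1, h2⟩
    funext i
    by_cases hi : ∃ k, e k = i
    · obtain ⟨k, rfl⟩ := hi; exact congrFun h1 k
    · push_neg at hi; exact h2 i hi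
  · rintro rfl
    exact ⟨rfl, fun i _ => rfl⟩

lemma opBlock_op2 (e : Fin n → Fin m) (he : Function.Injective e)
    (X : End2 N) (a b : Fin n) :
    opBlock N e (op2 N n X a b) = op2 N m X (e a) (e b) := by
  classical
  ext f g
  rw [opBlock_apply, op2_apply, op2_apply, mul_assoc, ind_mul_ind]
  show X (f (e a), f (e b)) (g (e a), g (e b)) * _ = X (f (e a), f (e b)) (g (e a), g (e b)) * _
  congr 1
  refine if_congr ?_ rfl rfl
  constructor
  · rintro ⟨h1, h2⟩ i ⟨hia, hib⟩
    by_cases hi : ∃ k, e k = i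
    · obtain ⟨k, rfl⟩ := hi
      exact h1 k ⟨fun h' => hia (by rw [h']), fun h' => hib (by rw [h'])⟩
    · push_neg at hi; exact h2 i hi
  · intro h
    refine ⟨fun k ⟨hka, hkb⟩ => h (e k) ⟨fun h' => hka (he h'), fun h' => hkb (he h')⟩,
      fun i hi => h i ⟨Ne.symm (hi a), Ne.symm (hi b)⟩⟩

lemma opBlock_comp {p : ℕ} (e : Fin n → Fin m) (he : Function.Injective e)
    (e' : Fin p → Fin n) (Z : EndT N p) :
    opBlock N e (opBlock N e' Z) = opBlock N (e ∘ e') Z := by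
  classical
  ext f g
  rw [opBlock_apply, opBlock_apply, opBlock_apply, mul_assoc, ind_mul_ind]
  show Z (f ∘ (e ∘ e')) (g ∘ (e ∘ e')) * _ = Z (f ∘ (e ∘ e')) (g ∘ (e ∘ e')) * _
  congr 1
  refine if_congr ?_ rfl rfl
  constructor
  · rintro ⟨h1, h2⟩ i hi
    by_cases hie : ∃ j, e j = i
    · obtain ⟨j, rfl⟩ := hie
      exact h1 j (fun k hk => hi k (by rw [Function.comp_apply, hk]))
    · push_neg at hie; exact h2 i hie
  · intro h
    constructor
    · intro j hj
      exact h (e j) (fun k hk => hj k (he hk))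
    · intro i hi
      exact h i (fun k => hi (e' k))

lemma opBlock_mul_opBlock_disjoint {n' : ℕ} (e : Fin n → Fin m) (e' : Fin n' → Fin m)
    (hdis : ∀ k k', e k ≠ e' k') (X : EndT N n) (Y : EndT N n')
    (f h : Fin m → Fin N) :
    (opBlock N e X * opBlock N e' Y) f h =
      X (f ∘ e) (h ∘ e) * Y (f ∘ e') (h ∘ e') *
        if (∀ i, ((∀ k, e k ≠ i) ∧ (∀ k, e' k ≠ i)) → f i = h i) then 1 else 0 := by
  classical
  rw [Matrix.mul_apply]
  set g₀ : Fin m → Fin N := fun i => if ∃ k, e k = i then h i else f i with hg₀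
  have hg₀e : g₀ ∘ e = h ∘ e := by
    funext k
    have hex : ∃ k', e k' = e k := ⟨k, rfl⟩
    simp only [hg₀, Function.comp_apply, if_pos hex]
  have hg₀e' : g₀ ∘ e' = f ∘ e' := by
    funext k'
    have : ¬ ∃ k, e k = e' k' := by push_neg; exact fun k => hdis k k'
    simp only [hg₀, Function.comp_apply, if_neg this]
  have hg₀out : ∀ i, (∀ k, e k ≠ i) → g₀ i = f i := by
    intro i hi
    have : ¬ ∃ k, e k = i := by push_neg; exact hi
    simp only [hg₀, if_neg this]
  rw [Finset.sum_eq_single g₀]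
  · rw [opBlock_apply, opBlock_apply, hg₀e, hg₀e']
    have h1 : ∀ i, (∀ k, e k ≠ i) → f i = g₀ i := fun i hi => (hg₀out i hi).symm
    rw [if_pos h1]
    have h2 : (∀ i, (∀ k, e' k ≠ i) → g₀ i = h i) ↔
        (∀ i, ((∀ k, e k ≠ i) ∧ (∀ k, e' k ≠ i)) → f i = h i) := by
      constructor
      · intro hyp i ⟨hie, hie'⟩; rw [← hg₀out i hie]; exact hyp i hie'
      · intro hyp i hie'
        by_cases hie : ∃ k, e k = i
        · simp only [hg₀, if_pos hie]
        · push_neg at hie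
          rw [hg₀out i hie]; exact hyp i ⟨hie, hie'⟩
    rw [if_congr h2 rfl rfl]
    ring
  · intro g _ hgne
    have : ∃ i, g i ≠ g₀ i := by
      by_contra hcon; push_neg at hcon
      exact hgne (funext hcon)
    obtain ⟨i, hi⟩ := this
    by_cases hie : ∃ k, e k = i
    · -- g₀ i = h i; second factor vanishes
      have hg₀i : g₀ i = h i := by simp only [hg₀, if_pos hie]
      have hie' : ∀ k, e' k ≠ i := by
        obtain ⟨k, rfl⟩ := hie
        exact fun k' h' => hdis k k' h'.symm
      rw [opBlock_apply (e := e'), ]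
      have : ¬ (∀ j, (∀ k, e' k ≠ j) → g j = h j) := by
        intro hyp; exact hi (by rw [hyp i hie', hg₀i])
      rw [if_neg this]
      ring
    · push_neg at hie
      have hg₀i : g₀ i = f i := hg₀out i hie
      rw [opBlock_apply (e := e)]
      have : ¬ (∀ j, (∀ k, e k ≠ j) → f j = g j) := by
        intro hyp; exact hi (by rw [← hyp i hie, hg₀i])
      rw [if_neg this]
      ring
  · intro habs
    exact absurd (Finset.mem_univ g₀) habs

lemma opBlock_comm_disjoint {n' : ℕ} (e : Fin n → Fin m) (e' : Fin n' → Fin m)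
    (hdis : ∀ k k', e k ≠ e' k') (X : EndT N n) (Y : EndT N n') :
    opBlock N e X * opBlock N e' Y = opBlock N e' Y * opBlock N e X := by
  classical
  ext f h
  rw [opBlock_mul_opBlock_disjoint e e' hdis,
      opBlock_mul_opBlock_disjoint e' e (fun k k' => (hdis k' k).symm)]
  rw [mul_comm (X (f ∘ e) (h ∘ e))]
  congr 1
  refine if_congr ?_ rfl rfl
  constructor
  · intro hyp i ⟨h1, h2⟩; exact hyp i ⟨h2, h1⟩
  · intro hyp i ⟨h1, h2⟩; exact hyp i ⟨h2, h1⟩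

/-- an `End2` as an `EndT N 2` -/
def to2 {N : ℕ} (X : End2 N) : EndT N 2 := fun f g => X (f 0, f 1) (g 0, g 1)

lemma op2_eq_opBlock (X : End2 N) (a b : Fin n) :
    op2 N n X a b = opBlock N ![a, b] (to2 X) := by
  classical
  ext f g
  rw [op2_apply, opBlock_apply]
  show X (f a, f b) (g a, g b) * _ = X (f a, f b) (g a, g b) * _
  congr 1
  refine if_congr ?_ rfl rfl
  constructor
  · intro hyp i hi
    exact hyp i ⟨fun h' => hi 0 (by simp [h'.symm]), fun h' => hi 1 (by simp [h'.symm])⟩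
  · intro hyp i ⟨hia, hib⟩
    refine hyp i fun k => ?_
    fin_cases k
    · simpa using fun h' => hia h'.symm
    · simpa using fun h' => hib h'.symm

lemma op2_comm_disjoint (X Y : End2 N) (a b c d : Fin n)
    (hac : a ≠ c) (had : a ≠ d) (hbc : b ≠ c) (hbd : b ≠ d) :
    op2 N n X a b * op2 N n Y c d = op2 N n Y c d * op2 N n X a b := by
  rw [op2_eq_opBlock X a b, op2_eq_opBlock Y c d]
  apply opBlock_comm_disjoint
  intro k k'
  fin_cases k <;> fin_cases k' <;> simpa using by assumption

lemma op2_comm_opBlock {p : ℕ} (X : End2 N) (a b : Fin n) (e : Fin p → Fin n)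
    (ha : ∀ k, e k ≠ a) (hb : ∀ k, e k ≠ b) (Z : EndT N p) :
    op2 N n X a b * opBlock N e Z = opBlock N e Z * op2 N n X a b := by
  rw [op2_eq_opBlock X a b]
  apply opBlock_comm_disjoint
  intro k k'
  fin_cases k
  · exact fun h' => ha k' h'.symm
  · exact fun h' => hb k' h'.symm

end
noncomputable section
open scoped BigOperators
variable {N m n : ℕ}

lemma permMat_mul_apply (π : Equiv.Perm (Fin n)) (M : EndT N n) (f h : Fin n → Fin N) :
    (permMat N n π * M) f h = M (f ∘ ⇑π⁻¹) h := by
  classical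
  rw [Matrix.mul_apply]
  rw [Finset.sum_eq_single (f ∘ ⇑π⁻¹)]
  · have : f = (f ∘ ⇑π⁻¹) ∘ ⇑π := by
      funext i; simp [Function.comp_apply]
    rw [permMat, if_pos this, one_mul]
  · intro g _ hgne
    have : f ≠ g ∘ ⇑π := by
      intro hfe
      apply hgne
      funext i
      have := congrFun hfe (π⁻¹ i)
      simpa using this.symm
    rw [permMat, if_neg this, zero_mul]
  · intro habs; exact absurd (Finset.mem_univ _) habs

lemma mul_permMat_apply (π : Equiv.Perm (Fin n)) (M : EndT N n) (f h : Fin n → Fin N) :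
    (M * permMat N n π) f h = M f (h ∘ ⇑π) := by
  classical
  rw [Matrix.mul_apply]
  rw [Finset.sum_eq_single (h ∘ ⇑π)]
  · rw [permMat, if_pos rfl, mul_one]
  · intro g _ hgne
    have : g ≠ h ∘ ⇑π := hgne
    rw [permMat, if_neg this, mul_zero]
  · intro habs; exact absurd (Finset.mem_univ _) habs

lemma permMat_mul_op2 (π : Equiv.Perm (Fin n)) (X : End2 N) (a b : Fin n) :
    permMat N n π * op2 N n X a b = op2 N n X (π⁻¹ a) (π⁻¹ b) * permMat N n π := by
  classical
  ext f h
  rw [permMat_mul_apply, mul_permMat_apply, op2_apply, op2_apply]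
  simp only [Function.comp_apply, show ∀ x, π (π⁻¹ x) = x from π.apply_symm_apply]
  congr 1
  refine if_congr ?_ rfl rfl
  constructor
  · intro hyp i ⟨hia, hib⟩
    have h1 : π i ≠ a := fun h' => hia (by rw [← h', show π⁻¹ (π i) = i from π.symm_apply_apply i])
    have h2 : π i ≠ b := fun h' => hib (by rw [← h', show π⁻¹ (π i) = i from π.symm_apply_apply i])
    have := hyp (π i) ⟨h1, h2⟩
    simpa using this
  · intro hyp i ⟨hia, hib⟩
    have h1 : π⁻¹ i ≠ π⁻¹ a := fun h' => hia (π⁻¹.injective h')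
    have h2 : π⁻¹ i ≠ π⁻¹ b := fun h' => hib (π⁻¹.injective h')
    have := hyp (π⁻¹ i) ⟨h1, h2⟩
    simpa using this

lemma op2_flip_eq_permMat (a b : Fin n) (hab : a ≠ b) :
    op2 N n (flipMat N) a b = permMat N n (Equiv.swap a b) := by
  classical
  ext f g
  rw [op2_apply, permMat]
  show (if f a = g b ∧ f b = g a then (1:ℂ) else 0) * _ = _
  rw [ind_mul_ind]
  refine if_congr ?_ rfl rfl
  constructor
  · rintro ⟨⟨h1, h2⟩, h3⟩
    funext i
    rcases eq_or_ne i a with rfl | hia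
    · simpa [Equiv.swap_apply_left] using h1
    rcases eq_or_ne i b with rfl | hib
    · simpa [Equiv.swap_apply_right] using h2
    · simpa [Equiv.swap_apply_of_ne_of_ne hia hib] using h3 i ⟨hia, hib⟩
  · rintro rfl
    refine ⟨⟨?_, ?_⟩, ?_⟩
    · simp [Equiv.swap_apply_left]
    · simp [Equiv.swap_apply_right]
    · intro i ⟨hia, hib⟩
      simp [Equiv.swap_apply_of_ne_of_ne hia hib]

lemma flip_mul_op2 (s t : Fin n) (hst : s ≠ t) (X : End2 N) (a b : Fin n) :
    op2 N n (flipMat N) s t * op2 N n X a b =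
      op2 N n X (Equiv.swap s t a) (Equiv.swap s t b) * op2 N n (flipMat N) s t := by
  rw [op2_flip_eq_permMat s t hst, permMat_mul_op2]
  rw [Equiv.swap_inv]

private lemma inj3 {a b c : Fin n} (hab : a ≠ b) (hac : a ≠ c) (hbc : b ≠ c) :
    Function.Injective ![a, b, c] := by
  intro i j hij
  fin_cases i <;> fin_cases j <;> simp_all

lemma ybe_transfer {R : ℂ → End2 N} (hR : YangBaxter N R) (a b c : Fin n)
    (hab : a ≠ b) (hac : a ≠ c) (hbc : b ≠ c) (u v : ℂ) :
    op2 N n (R u) a b * op2 N n (R (u + v)) a c * op2 N n (R v) b c =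
    op2 N n (R v) b c * op2 N n (R (u + v)) a c * op2 N n (R u) a b := by
  have hinj := inj3 hab hac hbc
  have := congrArg (opBlock N ![a, b, c]) (hR u v)
  rw [opBlock_mul _ hinj, opBlock_mul _ hinj, opBlock_mul _ hinj, opBlock_mul _ hinj] at this
  rw [opBlock_op2 _ hinj, opBlock_op2 _ hinj, opBlock_op2 _ hinj] at this
  simpa using this

end
noncomputable section
open scoped BigOperators
variable {N m n : ℕ}

lemma opBlock_list_prod (e : Fin n → Fin m) (he : Function.Injective e)
    (l : List (EndT N n)) :
    opBlock N e l.prod = (l.map (opBlock N e)).prod := by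
  induction l with
  | nil => simpa using opBlock_one e he
  | cons x t ih =>
    rw [List.prod_cons, List.map_cons, List.prod_cons, opBlock_mul e he, ih]

lemma lexPairs_succ :
    lexPairs (m + 1) =
      ((List.finRange m).map fun j => ((0 : Fin (m + 1)), j.succ)) ++
        (lexPairs m).map (Prod.map Fin.succ Fin.succ) := by
  rw [lexPairs, lexPairs]
  rw [List.finRange_succ, List.flatMap_cons]
  congr 1
  · -- row 0
    rw [List.filter_cons]
    have h0 : (decide ((0 : Fin (m+1)) < 0)) = false := by simp
    simp only [h0, cond_false, Bool.false_eq_true, if_false]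
    rw [List.filter_map]
    have hp : ((fun j => decide ((0 : Fin (m+1)) < j)) ∘ Fin.succ) = fun _ => true := by
      funext j; simp [Fin.succ_pos]
    rw [hp, List.filter_true, List.map_map]
    rfl
  · rw [List.flatMap_map, List.map_flatMap]
    congr 1
    funext i
    rw [List.filter_cons]
    have h0 : (decide (Fin.succ i < 0)) = false := by
      simp [Fin.not_lt, Fin.zero_le]
    simp only [h0, cond_false, Bool.false_eq_true, if_false]
    rw [List.filter_map, List.map_map, List.map_map]
    have hp : ((fun j => decide (Fin.succ i < j)) ∘ Fin.succ) = fun j => decide (i < j) := by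
      funext j
      exact decide_eq_decide.mpr Fin.succ_lt_succ_iff
    rw [hp]
    rfl

lemma Fop_succ (R : ℂ → End2 N) (c : Fin (m + 1) → ℂ) :
    Fop N R c =
      ((List.finRange m).map fun j =>
        op2 N (m + 1) (R (c 0 - c j.succ)) 0 j.succ).prod *
      opBlock N Fin.succ (Fop N R (c ∘ Fin.succ)) := by
  rw [Fop, lexPairs_succ, List.map_append, List.prod_append]
  congr 1
  · rw [List.map_map]; rfl
  · rw [Fop, opBlock_list_prod _ (Fin.succ_injective m), List.map_map, List.map_map]
    refine congrArg List.prod (List.map_congr_left fun p _ => ?_)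
    show _ = opBlock N Fin.succ (op2 N m (R ((c ∘ Fin.succ) p.1 - (c ∘ Fin.succ) p.2)) p.1 p.2)
    rw [opBlock_op2 _ (Fin.succ_injective m)]
    rfl

lemma finRange_split : ∀ (n k : ℕ) (hk : k + 1 < n),
    ∃ l₁ l₂ : List (Fin n),
      List.finRange n = l₁ ++ ⟨k, Nat.lt_of_succ_lt hk⟩ :: ⟨k + 1, hk⟩ :: l₂ ∧
        (∀ j ∈ l₁, (j : ℕ) < k) ∧ (∀ j ∈ l₂, k + 1 < (j : ℕ)) := by
  intro n k
  induction k generalizing n with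
  | zero =>
    intro hk
    obtain ⟨n', rfl⟩ : ∃ n', n = n' + 2 := ⟨n - 2, by omega⟩
    refine ⟨[], ((List.finRange n').map Fin.succ).map Fin.succ, ?_, by simp, ?_⟩
    · rw [List.finRange_succ, List.finRange_succ]
      simp only [List.map_cons, List.nil_append]
      rfl
    · intro j hj
      simp only [List.mem_map] at hj
      obtain ⟨j', ⟨j'', _, rfl⟩, rfl⟩ := hj
      simp [Fin.val_succ]
  | succ k ih =>
    intro hk
    obtain ⟨n', rfl⟩ : ∃ n', n = n' + 1 := ⟨n - 1, by omega⟩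
    obtain ⟨l₁, l₂, heq, h1, h2⟩ := ih n' (by omega)
    refine ⟨0 :: l₁.map Fin.succ, l₂.map Fin.succ, ?_, ?_, ?_⟩
    · rw [List.finRange_succ, heq]
      simp only [List.map_append, List.map_cons, List.cons_append]
      rfl
    · intro j hj
      rcases List.mem_cons.mp hj with rfl | hj'
      · simp
      · obtain ⟨j', hj'', rfl⟩ := List.mem_map.mp hj'
        have := h1 j' hj''
        simp [Fin.val_succ]; omega
    · intro j hj
      obtain ⟨j', hj'', rfl⟩ := List.mem_map.mp hj
      have := h2 j' hj''
      simp [Fin.val_succ]; omega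

end
noncomputable section
open scoped BigOperators
variable {N n : ℕ}

lemma train {R : ℂ → End2 N} (hR : YangBaxter N R) (a b : Fin n) (hab : a ≠ b)
    (u : ℂ) (v : Fin n → ℂ) :
    ∀ l : List (Fin n), l.Nodup → (∀ j ∈ l, j ≠ a ∧ j ≠ b) →
    op2 N n (R u) a b * (l.map fun j => op2 N n (R (u + v j)) a j).prod *
      (l.map fun j => op2 N n (R (v j)) b j).prod =
    (l.map fun j => op2 N n (R (v j)) b j).prod *
      (l.map fun j => op2 N n (R (u + v j)) a j).prod * op2 N n (R u) a b := by
  intro l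
  induction l with
  | nil => simp
  | cons j t ih =>
    intro hnd hmem
    obtain ⟨hja, hjb⟩ := hmem j (List.mem_cons_self)
    have hndt : t.Nodup := (List.nodup_cons.mp hnd).2
    have hjt : j ∉ t := (List.nodup_cons.mp hnd).1
    have hmemt : ∀ x ∈ t, x ≠ a ∧ x ≠ b := fun x hx => hmem x (List.mem_cons_of_mem _ hx)
    simp only [List.map_cons, List.prod_cons]
    set Rab := op2 N n (R u) a b with hRab
    set Aj := op2 N n (R (u + v j)) a j with hAj
    set Bj := op2 N n (R (v j)) b j with hBj
    set PA := (t.map fun j' => op2 N n (R (u + v j')) a j').prod with hPA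
    set PB := (t.map fun j' => op2 N n (R (v j')) b j').prod with hPB
    have cA : Commute Bj PA := by
      apply Commute.list_prod_right
      intro x hx
      obtain ⟨j', hj', rfl⟩ := List.mem_map.mp hx
      exact op2_comm_disjoint _ _ _ _ _ _ hab.symm ((hmemt j' hj').2).symm hja
        (fun h' => hjt (h' ▸ hj'))
    have cB : Commute Aj PB := by
      apply Commute.list_prod_right
      intro x hx
      obtain ⟨j', hj', rfl⟩ := List.mem_map.mp hx
      exact op2_comm_disjoint _ _ _ _ _ _ hab ((hmemt j' hj').1).symm hjb
        (fun h' => hjt (h' ▸ hj'))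
    have ybe : Rab * Aj * Bj = Bj * Aj * Rab :=
      ybe_transfer hR a b j hab hja.symm hjb.symm u (v j)
    have ihe : Rab * PA * PB = PB * PA * Rab := ih hndt hmemt
    calc Rab * (Aj * PA) * (Bj * PB)
        = Rab * Aj * (PA * Bj) * PB := by simp only [mul_assoc]
      _ = Rab * Aj * (Bj * PA) * PB := by rw [← cA.eq]
      _ = (Rab * Aj * Bj) * (PA * PB) := by simp only [mul_assoc]
      _ = (Bj * Aj * Rab) * (PA * PB) := by rw [ybe]
      _ = Bj * Aj * (Rab * PA * PB) := by simp only [mul_assoc]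
      _ = Bj * Aj * (PB * PA * Rab) := by rw [ihe]
      _ = Bj * (Aj * PB) * (PA * Rab) := by simp only [mul_assoc]
      _ = Bj * (PB * Aj) * (PA * Rab) := by rw [cB.eq]
      _ = Bj * PB * (Aj * PA) * Rab := by simp only [mul_assoc]
end
noncomputable section
open scoped BigOperators

lemma conj_list {M : Type*} [Monoid M] (P : M) {α : Type*} (f g : α → M) :
    ∀ l : List α, (∀ x ∈ l, P * f x = g x * P) →
      P * (l.map f).prod = (l.map g).prod * P := by
  intro l
  induction l with
  | nil => simp
  | cons a t ih =>
    intro h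
    simp only [List.map_cons, List.prod_cons]
    calc P * (f a * (t.map f).prod) = (P * f a) * (t.map f).prod := by rw [mul_assoc]
      _ = (g a * P) * (t.map f).prod := by rw [h a (List.mem_cons_self)]
      _ = g a * (P * (t.map f).prod) := by rw [mul_assoc]
      _ = g a * ((t.map g).prod * P) := by
          rw [ih fun x hx => h x (List.mem_cons_of_mem _ hx)]
      _ = g a * (t.map g).prod * P := by rw [mul_assoc]

lemma k0_shuffle {M : Type*} [Monoid M] {P Rw10 Rw01 R01 Rmw10 Rmw01 A B A' B' D : M}
    (p1 : P * Rw10 = Rw01 * P)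
    (p2 : P * R01 = Rmw10 * P)
    (p2' : P * Rmw01 = Rmw10 * P)
    (p3 : P * A = B' * P)
    (p4 : P * B = A' * P)
    (p5 : P * D = D * P)
    (dr : Rmw10 * D = D * Rmw10)
    (tr : Rmw10 * B' * A' = A' * B' * Rmw10) :
    P * Rw10 * (R01 * A * (B * D)) = Rw01 * A' * (B' * D) * (P * Rmw01) := by
  calc P * Rw10 * (R01 * A * (B * D))
      = (P * Rw10) * (R01 * A * (B * D)) := rfl
    _ = (Rw01 * P) * (R01 * A * (B * D)) := by rw [p1]
    _ = Rw01 * ((P * R01) * (A * (B * D))) := by simp only [mul_assoc]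
    _ = Rw01 * ((Rmw10 * P) * (A * (B * D))) := by rw [p2]
    _ = Rw01 * (Rmw10 * ((P * A) * (B * D))) := by simp only [mul_assoc]
    _ = Rw01 * (Rmw10 * ((B' * P) * (B * D))) := by rw [p3]
    _ = Rw01 * (Rmw10 * (B' * ((P * B) * D))) := by simp only [mul_assoc]
    _ = Rw01 * (Rmw10 * (B' * ((A' * P) * D))) := by rw [p4]
    _ = Rw01 * (Rmw10 * (B' * (A' * (P * D)))) := by simp only [mul_assoc]
    _ = Rw01 * (Rmw10 * (B' * (A' * (D * P)))) := by rw [p5]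
    _ = Rw01 * ((Rmw10 * B' * A') * D) * P := by simp only [mul_assoc]
    _ = Rw01 * ((A' * B' * Rmw10) * D) * P := by rw [tr]
    _ = Rw01 * (A' * (B' * (Rmw10 * D))) * P := by simp only [mul_assoc]
    _ = Rw01 * (A' * (B' * (D * Rmw10))) * P := by rw [dr]
    _ = Rw01 * A' * (B' * D) * (Rmw10 * P) := by simp only [mul_assoc]
    _ = Rw01 * A' * (B' * D) * (P * Rmw01) := by rw [← p2']

lemma succ_zero_eq_one' {p : ℕ} : Fin.succ (0 : Fin (p + 1)) = (1 : Fin (p + 2)) := by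
  apply Fin.ext
  simp [Fin.val_succ]

lemma Fop_decomp2 {N p : ℕ} (R : ℂ → End2 N) (d : Fin (p + 1 + 1) → ℂ) :
    Fop N R d =
      op2 N (p + 1 + 1) (R (d 0 - d 1)) 0 1 *
        ((List.finRange p).map fun x =>
          op2 N (p + 1 + 1) (R (d 0 - d x.succ.succ)) 0 x.succ.succ).prod *
      (((List.finRange p).map fun x =>
          op2 N (p + 1 + 1) (R (d 1 - d x.succ.succ)) 1 x.succ.succ).prod *
        opBlock N (Fin.succ ∘ Fin.succ) (Fop N R (d ∘ Fin.succ ∘ Fin.succ))) := by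
  rw [Fop_succ R d, Fop_succ R (d ∘ Fin.succ)]
  rw [opBlock_mul _ (Fin.succ_injective _)]
  rw [opBlock_list_prod _ (Fin.succ_injective _)]
  rw [opBlock_comp _ (Fin.succ_injective _)]
  have hB : (((List.finRange p).map fun x =>
        op2 N (p+1) (R ((d ∘ Fin.succ) 0 - (d ∘ Fin.succ) x.succ)) 0 x.succ).map
          (opBlock N Fin.succ)).prod
      = ((List.finRange p).map fun x =>
          op2 N (p+1+1) (R (d 1 - d x.succ.succ)) 1 x.succ.succ).prod := by
    rw [List.map_map]
    refine congrArg List.prod (List.map_congr_left fun x _ => ?_)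
    show opBlock N Fin.succ
        (op2 N (p+1) (R ((d ∘ Fin.succ) 0 - (d ∘ Fin.succ) x.succ)) 0 x.succ) = _
    rw [opBlock_op2 _ (Fin.succ_injective _)]
    show op2 N (p+1+1) (R (d (Fin.succ 0) - d x.succ.succ)) (Fin.succ 0) x.succ.succ = _
    rw [succ_zero_eq_one']
  rw [hB]
  simp only [List.finRange_succ, List.map_cons, List.prod_cons, List.map_map]
  rw [succ_zero_eq_one']
  rfl
end
noncomputable section
open scoped BigOperators

lemma pair_shuffle {M : Type*} [Monoid M] {P A B C A' B' : M}
    (h1 : A * (B * C) = C * (B * A)) (h2 : P * A = A' * P) (h3 : P * B = B' * P) :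
    P * C * (B * A) = A' * B' * (P * C) := by
  calc P * C * (B * A) = P * (C * (B * A)) := by simp only [mul_assoc]
    _ = P * (A * (B * C)) := by rw [← h1]
    _ = (P * A) * (B * C) := by simp only [mul_assoc]
    _ = (A' * P) * (B * C) := by rw [h2]
    _ = A' * ((P * B) * C) := by simp only [mul_assoc]
    _ = A' * ((B' * P) * C) := by rw [h3]
    _ = A' * B' * (P * C) := by simp only [mul_assoc]

lemma row_shuffle {M : Type*} [Monoid M] {L A B Gj Gj1 G'j G'j1 : M}
    (hA : L * A = A * L) (hB : L * B = B * L) (hpair : L * (Gj * Gj1) = (G'j * G'j1) * L) :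
    L * (A * (Gj * (Gj1 * B))) = A * (G'j * (G'j1 * B)) * L := by
  calc L * (A * (Gj * (Gj1 * B))) = (L * A) * ((Gj * Gj1) * B) := by simp only [mul_assoc]
    _ = (A * L) * ((Gj * Gj1) * B) := by rw [hA]
    _ = A * ((L * (Gj * Gj1)) * B) := by simp only [mul_assoc]
    _ = A * (((G'j * G'j1) * L) * B) := by rw [hpair]
    _ = A * (G'j * G'j1) * (L * B) := by simp only [mul_assoc]
    _ = A * (G'j * G'j1) * (B * L) := by rw [hB]
    _ = A * (G'j * (G'j1 * B)) * L := by simp only [mul_assoc]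

lemma main_lemma (N : ℕ) (R : ℂ → End2 N) (hR : YangBaxter N R) :
    ∀ (n : ℕ) (c : Fin n → ℂ) (k : ℕ) (hk : k + 1 < n),
    op2 N n (flipMat N) ⟨k, Nat.lt_of_succ_lt hk⟩ ⟨k + 1, hk⟩ *
      op2 N n (R (c ⟨k + 1, hk⟩ - c ⟨k, Nat.lt_of_succ_lt hk⟩)) ⟨k + 1, hk⟩ ⟨k, Nat.lt_of_succ_lt hk⟩ *
      Fop N R c =
    Fop N R (c ∘ Equiv.swap ⟨k, Nat.lt_of_succ_lt hk⟩ ⟨k + 1, hk⟩) *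
      (op2 N n (flipMat N) ⟨k, Nat.lt_of_succ_lt hk⟩ ⟨k + 1, hk⟩ *
      op2 N n (R (c ⟨k, Nat.lt_of_succ_lt hk⟩ - c ⟨k + 1, hk⟩)) ⟨k, Nat.lt_of_succ_lt hk⟩ ⟨k + 1, hk⟩) := by
  intro n
  induction n with
  | zero => intro c k hk; omega
  | succ m ih =>
    intro c k hk
    obtain _ | j := k
    · -- k = 0 case
      obtain ⟨p, rfl⟩ : ∃ p, m = p + 1 := ⟨m - 1, by omega⟩
      have e0 : (⟨0, by omega⟩ : Fin (p+1+1)) = 0 := by apply Fin.ext; simp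
      have e1 : (⟨0+1, hk⟩ : Fin (p+1+1)) = 1 := by apply Fin.ext; simp
      rw [e0, e1]
      have h01 : (0 : Fin (p+1+1)) ≠ 1 := Fin.ne_of_val_ne (by simp)
      set σ := Equiv.swap (0 : Fin (p+1+1)) 1 with hσ
      rw [Fop_decomp2 R c, Fop_decomp2 R (c ∘ ⇑σ)]
      have s0 : (c ∘ ⇑σ) (0 : Fin (p+1+1)) = c 1 := by
        simp only [Function.comp_apply, hσ, Equiv.swap_apply_left]
      have s1 : (c ∘ ⇑σ) (1 : Fin (p+1+1)) = c 0 := by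
        simp only [Function.comp_apply, hσ, Equiv.swap_apply_right]
      have sss : ∀ x : Fin p, (c ∘ ⇑σ) x.succ.succ = c x.succ.succ := by
        intro x
        have hx0 : x.succ.succ ≠ (0 : Fin (p+1+1)) :=
          Fin.ne_of_val_ne (by simp [Fin.val_succ])
        have hx1 : x.succ.succ ≠ (1 : Fin (p+1+1)) :=
          Fin.ne_of_val_ne (by simp [Fin.val_succ])
        simp only [Function.comp_apply, hσ]
        rw [Equiv.swap_apply_of_ne_of_ne hx0 hx1]
      have hD' : (c ∘ ⇑σ) ∘ Fin.succ ∘ Fin.succ = c ∘ Fin.succ ∘ Fin.succ := by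
        funext x; exact sss x
      simp only [s0, s1, sss, hD']
      -- hypotheses for the master shuffle
      have hssne0 : ∀ x : Fin p, x.succ.succ ≠ (0 : Fin (p+1+1)) := fun x =>
        Fin.ne_of_val_ne (by simp [Fin.val_succ])
      have hssne1 : ∀ x : Fin p, x.succ.succ ≠ (1 : Fin (p+1+1)) := fun x =>
        Fin.ne_of_val_ne (by simp [Fin.val_succ])
      have p1 : op2 N (p+1+1) (flipMat N) 0 1 * op2 N (p+1+1) (R (c 1 - c 0)) 1 0 =
          op2 N (p+1+1) (R (c 1 - c 0)) 0 1 * op2 N (p+1+1) (flipMat N) 0 1 := by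
        rw [flip_mul_op2 0 1 h01, Equiv.swap_apply_right, Equiv.swap_apply_left]
      have p2 : op2 N (p+1+1) (flipMat N) 0 1 * op2 N (p+1+1) (R (c 0 - c 1)) 0 1 =
          op2 N (p+1+1) (R (c 0 - c 1)) 1 0 * op2 N (p+1+1) (flipMat N) 0 1 := by
        rw [flip_mul_op2 0 1 h01, Equiv.swap_apply_left, Equiv.swap_apply_right]
      have p3 : op2 N (p+1+1) (flipMat N) 0 1 *
            ((List.finRange p).map fun x =>
              op2 N (p+1+1) (R (c 0 - c x.succ.succ)) 0 x.succ.succ).prod =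
          ((List.finRange p).map fun x =>
              op2 N (p+1+1) (R (c 0 - c x.succ.succ)) 1 x.succ.succ).prod *
            op2 N (p+1+1) (flipMat N) 0 1 := by
        apply conj_list
        intro x _
        rw [flip_mul_op2 0 1 h01, Equiv.swap_apply_left,
          Equiv.swap_apply_of_ne_of_ne (hssne0 x) (hssne1 x)]
      have p4 : op2 N (p+1+1) (flipMat N) 0 1 *
            ((List.finRange p).map fun x =>
              op2 N (p+1+1) (R (c 1 - c x.succ.succ)) 1 x.succ.succ).prod =
          ((List.finRange p).map fun x =>
              op2 N (p+1+1) (R (c 1 - c x.succ.succ)) 0 x.succ.succ).prod *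
            op2 N (p+1+1) (flipMat N) 0 1 := by
        apply conj_list
        intro x _
        rw [flip_mul_op2 0 1 h01, Equiv.swap_apply_right,
          Equiv.swap_apply_of_ne_of_ne (hssne0 x) (hssne1 x)]
      have hcomp0 : ∀ x : Fin p, (Fin.succ ∘ Fin.succ) x ≠ (0 : Fin (p+1+1)) := hssne0
      have hcomp1 : ∀ x : Fin p, (Fin.succ ∘ Fin.succ) x ≠ (1 : Fin (p+1+1)) := hssne1
      have p5 : op2 N (p+1+1) (flipMat N) 0 1 *
            opBlock N (Fin.succ ∘ Fin.succ) (Fop N R (c ∘ Fin.succ ∘ Fin.succ)) =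
          opBlock N (Fin.succ ∘ Fin.succ) (Fop N R (c ∘ Fin.succ ∘ Fin.succ)) *
            op2 N (p+1+1) (flipMat N) 0 1 :=
        op2_comm_opBlock _ _ _ _ hcomp0 hcomp1 _
      have dr : op2 N (p+1+1) (R (c 0 - c 1)) 1 0 *
            opBlock N (Fin.succ ∘ Fin.succ) (Fop N R (c ∘ Fin.succ ∘ Fin.succ)) =
          opBlock N (Fin.succ ∘ Fin.succ) (Fop N R (c ∘ Fin.succ ∘ Fin.succ)) *
            op2 N (p+1+1) (R (c 0 - c 1)) 1 0 :=
        op2_comm_opBlock _ _ _ _ hcomp1 hcomp0 _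
      -- the train argument
      have hinj2 : Function.Injective (fun x : Fin p => x.succ.succ) := by
        intro x y h
        exact Fin.succ_injective _ (Fin.succ_injective _ h)
      have hnd : ((List.finRange p).map (fun x : Fin p => x.succ.succ)).Nodup :=
        (List.nodup_finRange p).map hinj2
      have hmem : ∀ jj ∈ (List.finRange p).map (fun x : Fin p => x.succ.succ),
          jj ≠ (1 : Fin (p+1+1)) ∧ jj ≠ 0 := by
        intro jj hjj
        obtain ⟨x, _, rfl⟩ := List.mem_map.mp hjj
        exact ⟨hssne1 x, hssne0 x⟩
      have t := train hR (1 : Fin (p+1+1)) 0 h01.symm (c 0 - c 1) (fun y => c 1 - c y)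
        ((List.finRange p).map (fun x : Fin p => x.succ.succ)) hnd hmem
      have harg : (fun j : Fin (p+1+1) =>
            op2 N (p+1+1) (R ((c 0 - c 1) + (c 1 - c j))) 1 j) =
          fun j => op2 N (p+1+1) (R (c 0 - c j)) 1 j := by
        funext j
        rw [show (c 0 - c 1) + (c 1 - c j) = c 0 - c j from by ring]
      rw [harg, List.map_map, List.map_map] at t
      have tr : op2 N (p+1+1) (R (c 0 - c 1)) 1 0 *
            ((List.finRange p).map fun x =>
              op2 N (p+1+1) (R (c 0 - c x.succ.succ)) 1 x.succ.succ).prod *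
            ((List.finRange p).map fun x =>
              op2 N (p+1+1) (R (c 1 - c x.succ.succ)) 0 x.succ.succ).prod =
          ((List.finRange p).map fun x =>
              op2 N (p+1+1) (R (c 1 - c x.succ.succ)) 0 x.succ.succ).prod *
            ((List.finRange p).map fun x =>
              op2 N (p+1+1) (R (c 0 - c x.succ.succ)) 1 x.succ.succ).prod *
            op2 N (p+1+1) (R (c 0 - c 1)) 1 0 := t
      exact k0_shuffle p1 p2 p2 p3 p4 p5 dr tr
    · -- k = j + 1 case
      have hjm : j + 1 < m := by omega
      set ka : Fin (m+1) := ⟨j+1, by omega⟩ with hka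
      set kb : Fin (m+1) := ⟨j+1+1, hk⟩ with hkb
      have hka0 : ka ≠ 0 := by simp [hka, Fin.ext_iff]
      have hkb0 : kb ≠ 0 := by simp [hkb, Fin.ext_iff]
      have hkakb : ka ≠ kb := by simp [hka, hkb, Fin.ext_iff]
      set σ : Equiv.Perm (Fin (m+1)) := Equiv.swap ka kb with hσ
      set P := op2 N (m+1) (flipMat N) ka kb with hP
      set Rw := op2 N (m+1) (R (c kb - c ka)) kb ka with hRw
      set Rmw := op2 N (m+1) (R (c ka - c kb)) ka kb with hRmw
      set G : Fin m → EndT N (m+1) :=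
        fun j' => op2 N (m+1) (R (c 0 - c j'.succ)) 0 j'.succ with hG
      set G' : Fin m → EndT N (m+1) :=
        fun j' => op2 N (m+1) (R ((c ∘ σ) 0 - (c ∘ σ) j'.succ)) 0 j'.succ with hG'
      set Block := opBlock N Fin.succ (Fop N R (c ∘ Fin.succ)) with hBlock
      set Block' := opBlock N Fin.succ (Fop N R ((c ∘ σ) ∘ Fin.succ)) with hBlock'
      have hFop : Fop N R c = ((List.finRange m).map G).prod * Block := Fop_succ R c
      have hFop' : Fop N R (c ∘ σ) = ((List.finRange m).map G').prod * Block' :=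
        Fop_succ R (c ∘ σ)
      -- transferred induction hypothesis
      have hcs : (c ∘ Fin.succ) ∘ Equiv.swap ⟨j, by omega⟩ ⟨j + 1, hjm⟩ =
          (c ∘ σ) ∘ Fin.succ := by
        funext x
        show c (Fin.succ (Equiv.swap _ _ x)) = c (σ (Fin.succ x))
        congr 1
        rw [hσ]
        have : ka = Fin.succ ⟨j, by omega⟩ := rfl
        have h2 : kb = Fin.succ ⟨j + 1, hjm⟩ := rfl
        rw [this, h2, Function.Injective.swap_apply (Fin.succ_injective m)]
      have hblock : P * Rw * Block = Block' * (P * Rmw) := by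
        have tIH := congrArg (opBlock N Fin.succ) (ih (c ∘ Fin.succ) j hjm)
        simp only [opBlock_mul _ (Fin.succ_injective m), opBlock_op2 _ (Fin.succ_injective m),
            hcs] at tIH
        exact tIH
      -- the row move
      obtain ⟨l₁, l₂, hsplit, hl₁, hl₂⟩ := finRange_split m j hjm
      have hG1 : ∀ j' ∈ l₁, G' j' = G j' := by
        intro j' hj'
        have hv := hl₁ j' hj'
        rw [hG', hG]
        have h0 : σ (0 : Fin (m+1)) = 0 :=
          Equiv.swap_apply_of_ne_of_ne (Ne.symm hka0) (Ne.symm hkb0)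
        have hs : σ j'.succ = j'.succ := by
          apply Equiv.swap_apply_of_ne_of_ne <;>
            simp [hka, hkb, Fin.ext_iff, Fin.val_succ] <;> omega
        show op2 N (m+1) (R (c (σ 0) - c (σ j'.succ))) 0 j'.succ = _
        rw [h0, hs]
      have hG2 : ∀ j' ∈ l₂, G' j' = G j' := by
        intro j' hj'
        have hv := hl₂ j' hj'
        rw [hG', hG]
        have h0 : σ (0 : Fin (m+1)) = 0 :=
          Equiv.swap_apply_of_ne_of_ne (Ne.symm hka0) (Ne.symm hkb0)
        have hs : σ j'.succ = j'.succ := by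
          apply Equiv.swap_apply_of_ne_of_ne <;>
            simp [hka, hkb, Fin.ext_iff, Fin.val_succ] <;> omega
        show op2 N (m+1) (R (c (σ 0) - c (σ j'.succ))) 0 j'.succ = _
        rw [h0, hs]
      have hcomm1 : ∀ j' ∈ l₁, Commute (P * Rw) (G j') := by
        intro j' hj'
        have hv := hl₁ j' hj'
        have d1 : ka ≠ j'.succ := by simp [hka, Fin.ext_iff, Fin.val_succ]; omega
        have d2 : kb ≠ j'.succ := by simp [hkb, Fin.ext_iff, Fin.val_succ]; omega
        exact Commute.mul_left
          (op2_comm_disjoint _ _ _ _ _ _ hka0 d1 hkb0 d2)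
          (op2_comm_disjoint _ _ _ _ _ _ hkb0 d2 hka0 d1)
      have hcomm2 : ∀ j' ∈ l₂, Commute (P * Rw) (G j') := by
        intro j' hj'
        have hv := hl₂ j' hj'
        have d1 : ka ≠ j'.succ := by simp [hka, Fin.ext_iff, Fin.val_succ]; omega
        have d2 : kb ≠ j'.succ := by simp [hkb, Fin.ext_iff, Fin.val_succ]; omega
        exact Commute.mul_left
          (op2_comm_disjoint _ _ _ _ _ _ hka0 d1 hkb0 d2)
          (op2_comm_disjoint _ _ _ _ _ _ hkb0 d2 hka0 d1)
      -- the middle pair : indices ⟨j⟩ and ⟨j+1⟩ in Fin m, with succ = ka, kb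
      have hGj : G ⟨j, by omega⟩ = op2 N (m+1) (R (c 0 - c ka)) 0 ka := rfl
      have hGj1 : G ⟨j+1, hjm⟩ = op2 N (m+1) (R (c 0 - c kb)) 0 kb := rfl
      have hG'j : G' ⟨j, by omega⟩ = op2 N (m+1) (R (c 0 - c kb)) 0 ka := by
        rw [hG']
        show op2 N (m+1) (R (c (σ 0) - c (σ ka))) 0 ka = _
        rw [Equiv.swap_apply_of_ne_of_ne (Ne.symm hka0) (Ne.symm hkb0),
          Equiv.swap_apply_left]
      have hG'j1 : G' ⟨j+1, hjm⟩ = op2 N (m+1) (R (c 0 - c ka)) 0 kb := by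
        rw [hG']
        show op2 N (m+1) (R (c (σ 0) - c (σ kb))) 0 kb = _
        rw [Equiv.swap_apply_of_ne_of_ne (Ne.symm hka0) (Ne.symm hkb0),
          Equiv.swap_apply_right]
      have hpair : (P * Rw) * (G ⟨j, by omega⟩ * G ⟨j+1, hjm⟩) =
          (G' ⟨j, by omega⟩ * G' ⟨j+1, hjm⟩) * (P * Rw) := by
        rw [hGj, hGj1, hG'j, hG'j1]
        have h0ka : (0 : Fin (m+1)) ≠ ka := Ne.symm hka0
        have h0kb : (0 : Fin (m+1)) ≠ kb := Ne.symm hkb0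
        have ybe := ybe_transfer hR (0 : Fin (m+1)) kb ka h0kb h0ka (Ne.symm hkakb)
          (c 0 - c kb) (c kb - c ka)
        have harg : c 0 - c kb + (c kb - c ka) = c 0 - c ka := by ring
        rw [harg] at ybe
        simp only [mul_assoc] at ybe
        have h2 : P * op2 N (m+1) (R (c 0 - c kb)) 0 kb =
            op2 N (m+1) (R (c 0 - c kb)) 0 ka * P := by
          rw [hP, flip_mul_op2 ka kb hkakb,
            Equiv.swap_apply_of_ne_of_ne (Ne.symm hka0) (Ne.symm hkb0),
            Equiv.swap_apply_right]
        have h3 : P * op2 N (m+1) (R (c 0 - c ka)) 0 ka =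
            op2 N (m+1) (R (c 0 - c ka)) 0 kb * P := by
          rw [hP, flip_mul_op2 ka kb hkakb,
            Equiv.swap_apply_of_ne_of_ne (Ne.symm hka0) (Ne.symm hkb0),
            Equiv.swap_apply_left]
        exact pair_shuffle ybe h2 h3
      have hrow : (P * Rw) * ((List.finRange m).map G).prod =
          ((List.finRange m).map G').prod * (P * Rw) := by
        rw [hsplit]
        simp only [List.map_append, List.map_cons, List.prod_append, List.prod_cons]
        have c1 : Commute (P * Rw) (l₁.map G).prod :=
          Commute.list_prod_right _ _ (by
            intro x hx; obtain ⟨j', hj', rfl⟩ := List.mem_map.mp hx; exact hcomm1 j' hj')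
        have c2 : Commute (P * Rw) (l₂.map G).prod :=
          Commute.list_prod_right _ _ (by
            intro x hx; obtain ⟨j', hj', rfl⟩ := List.mem_map.mp hx; exact hcomm2 j' hj')
        have e1 : (l₁.map G').prod = (l₁.map G).prod :=
          congrArg List.prod (List.map_congr_left fun x hx => hG1 x hx)
        have e2 : (l₂.map G').prod = (l₂.map G).prod :=
          congrArg List.prod (List.map_congr_left fun x hx => hG2 x hx)
        rw [e1, e2]
        exact row_shuffle c1.eq c2.eq hpair
      -- assemble
      show P * Rw * Fop N R c = Fop N R (c ∘ σ) * (P * Rmw)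
      rw [hFop, hFop']
      calc P * Rw * (((List.finRange m).map G).prod * Block)
          = (P * Rw) * ((List.finRange m).map G).prod * Block := by simp only [mul_assoc]
        _ = ((List.finRange m).map G').prod * (P * Rw) * Block := by rw [hrow]
        _ = ((List.finRange m).map G').prod * (P * Rw * Block) := by simp only [mul_assoc]
        _ = ((List.finRange m).map G').prod * (Block' * (P * Rmw)) := by rw [hblock]
        _ = ((List.finRange m).map G').prod * Block' * (P * Rmw) := by simp only [mul_assoc]
end

/-- On `V^{⊗n}`:
`P_{k,k+1} R_{k+1,k}(c_{k+1}−c_k) · F(c) = F(c^{(s_k)}) · P_{k,k+1} R_{k,k+1}(c_k−c_{k+1})`,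
where `c^{(s_k)}` is obtained from `c` by exchanging `c_k` and `c_{k+1}`. -/
theorem Fop_swap_intertwining
    (N : ℕ) (R : ℂ → End2 N) (hR : YangBaxter N R)
    (n : ℕ) (hn : 2 ≤ n) (c : Fin n → ℂ)
    (k : ℕ) (hk : k + 1 < n) :
    op2 N n (flipMat N) ⟨k, by omega⟩ ⟨k + 1, hk⟩ *
      op2 N n (R (c ⟨k + 1, hk⟩ - c ⟨k, by omega⟩)) ⟨k + 1, hk⟩ ⟨k, by omega⟩ *
      Fop N R c =
    Fop N R (c ∘ Equiv.swap ⟨k, by omega⟩ ⟨k + 1, hk⟩) *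
      (op2 N n (flipMat N) ⟨k, by omega⟩ ⟨k + 1, hk⟩ *
      op2 N n (R (c ⟨k, by omega⟩ - c ⟨k + 1, hk⟩)) ⟨k, by omega⟩ ⟨k + 1, hk⟩) := by
  exact main_lemma N R hR n c k hk
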